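/- arXiv:0711.3242 — 4 statements merged into one kernel-verified Lean document; each statement's English description precedes it below -/
import Mathlib

section
/- The right-sided Bregman centroid, i.e., the unique minimizer over q ∈ X of (1/n)∑_{i=1}^n D_F(p_i‖q), is the center of mass p̄ = (1/n)∑_{i=1}^n p_i, independently of the choice of the generator F. -/
open scoped RealInnerProductSpace

/-- Bregman divergence of a generator `F` with gradient map `F'`. -/
noncomputable def bregman {d : ℕ}
    (F : EuclideanSpace ℝ (Fin d) → ℝ)
    (F' : EuclideanSpace ℝ (Fin d) → EuclideanSpace ℝ (Fin d))
    (p q : EuclideanSpace ℝ (Fin d)) : ℝ :=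
  F p - F q - ⟪p - q, F' q⟫

/-- Gradient inequality for convex functions. -/
lemma grad_ineq {d : ℕ} {X : Set (EuclideanSpace ℝ (Fin d))}
    {F : EuclideanSpace ℝ (Fin d) → ℝ} {g x y : EuclideanSpace ℝ (Fin d)}
    (hF : ConvexOn ℝ X F) (hx : x ∈ X) (hy : y ∈ X)
    (hg : HasGradientAt F g x) : F x + ⟪y - x, g⟫ ≤ F y := by
  set c : ℝ → EuclideanSpace ℝ (Fin d) := fun t => x + t • (y - x) with hc
  have hcd : HasDerivAt c (y - x) 0 := by
    simpa [hc] using (((hasDerivAt_id (0:ℝ)).smul_const (y - x)).const_add x)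
  have hcomp : HasDerivAt (fun t => F (c t)) ⟪y - x, g⟫ 0 := by
    have hgf := hg.hasFDerivAt
    rw [show x = c 0 by simp [hc]] at hgf
    have h2 := hgf.comp_hasDerivAt (0:ℝ) hcd
    simp only [InnerProductSpace.toDual_apply_apply] at h2
    rw [real_inner_comm]
    exact h2
  -- slope bound
  have hmem : ∀ t : ℝ, t ∈ Set.Ioc (0:ℝ) 1 → slope (fun t => F (c t)) 0 t ≤ F y - F x := by
    intro t ht
    have ht0 := ht.1
    have hcin : c t = (1 - t) • x + t • y := by
      simp only [hc]
      module
    have hconv := hF.2 hx hy (by linarith [ht.2] : (0:ℝ) ≤ 1 - t) ht0.le (by ring)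
    rw [← hcin] at hconv
    simp only [smul_eq_mul] at hconv
    have hc0 : F (c 0) = F x := by simp [hc]
    rw [slope_def_field, sub_zero, div_le_iff₀ ht0, hc0]
    nlinarith [hconv]
  have htend : Filter.Tendsto (slope (fun t => F (c t)) 0) (nhdsWithin 0 (Set.Ioi 0)) (nhds ⟪y - x, g⟫) := by
    have := hasDerivAt_iff_tendsto_slope.mp hcomp
    exact this.mono_left (nhdsWithin_mono _ (by intro t ht; exact ne_of_gt ht))
  have hle : ⟪y - x, g⟫ ≤ F y - F x := by
    refine le_of_tendsto htend ?_
    filter_upwards [Ioc_mem_nhdsGT_of_mem (by simp : (0:ℝ) ∈ Set.Ico (0:ℝ) 1)] with t ht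
    exact hmem t ht
  linarith

/-- Strict gradient inequality for strictly convex functions. -/
lemma grad_ineq_strict {d : ℕ} {X : Set (EuclideanSpace ℝ (Fin d))}
    {F : EuclideanSpace ℝ (Fin d) → ℝ} {g x y : EuclideanSpace ℝ (Fin d)}
    (hXconv : Convex ℝ X)
    (hF : StrictConvexOn ℝ X F) (hx : x ∈ X) (hy : y ∈ X) (hne : x ≠ y)
    (hg : HasGradientAt F g x) : F x + ⟪y - x, g⟫ < F y := by
  set m : EuclideanSpace ℝ (Fin d) := (1/2 : ℝ) • x + (1/2 : ℝ) • y with hm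
  have hmX : m ∈ X := hXconv hx hy (by norm_num) (by norm_num) (by norm_num)
  have hstrict : F m < (1/2 : ℝ) * F x + (1/2 : ℝ) * F y :=
    hF.2 hx hy hne (by norm_num) (by norm_num) (by norm_num)
  have hweak : F x + ⟪m - x, g⟫ ≤ F m := grad_ineq hF.convexOn hx hmX hg
  have hmx : m - x = (1/2 : ℝ) • (y - x) := by simp only [hm]; module
  rw [hmx, real_inner_smul_left] at hweak
  linarith

/-- The right-sided Bregman centroid is the center of mass, for any generator `F`. -/
theorem right_bregman_centroid_is_center_of_mass {d n : ℕ} (hn : 0 < n)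
    {X : Set (EuclideanSpace ℝ (Fin d))} (hXopen : IsOpen X) (hXconv : Convex ℝ X)
    {F : EuclideanSpace ℝ (Fin d) → ℝ}
    {F' : EuclideanSpace ℝ (Fin d) → EuclideanSpace ℝ (Fin d)}
    (hF : StrictConvexOn ℝ X F)
    (hF' : ∀ x ∈ X, HasGradientAt F (F' x) x)
    (p : Fin n → EuclideanSpace ℝ (Fin d)) (hp : ∀ i, p i ∈ X)
    (pbar : EuclideanSpace ℝ (Fin d)) (hpbar : pbar = (n : ℝ)⁻¹ • ∑ i, p i) :
    (∀ q ∈ X, (n : ℝ)⁻¹ * ∑ i, bregman F F' (p i) pbar ≤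
        (n : ℝ)⁻¹ * ∑ i, bregman F F' (p i) q) ∧
    (∀ q ∈ X, (n : ℝ)⁻¹ * ∑ i, bregman F F' (p i) pbar =
        (n : ℝ)⁻¹ * ∑ i, bregman F F' (p i) q → q = pbar) := by
  have hn0 : (n : ℝ) ≠ 0 := Nat.cast_ne_zero.mpr hn.ne'
  have hsum : ∑ i, p i = (n : ℝ) • pbar := by
    rw [hpbar, smul_smul, mul_inv_cancel₀ hn0, one_smul]
  have hpbarX : pbar ∈ X := by
    rw [hpbar, Finset.smul_sum]
    exact hXconv.sum_mem (fun i _ => by positivity)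
      (by simp [Finset.sum_const, mul_inv_cancel₀ hn0]) (fun i _ => hp i)
  -- key formula: for any q, the sum of Bregman divergences
  have key : ∀ q : EuclideanSpace ℝ (Fin d),
      ∑ i, bregman F F' (p i) q
        = (∑ i, F (p i)) - (n : ℝ) * F q - (n : ℝ) * ⟪pbar - q, F' q⟫ := by
    intro q
    unfold bregman
    have hs : ∑ i : Fin n, (p i - q) = (n : ℝ) • (pbar - q) := by
      rw [Finset.sum_sub_distrib, hsum, Finset.sum_const, Finset.card_univ,
        Fintype.card_fin]
      module
    rw [Finset.sum_sub_distrib, Finset.sum_sub_distrib, ← sum_inner, hs,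
      real_inner_smul_left, Finset.sum_const, Finset.card_univ, Fintype.card_fin,
      nsmul_eq_mul]
  have hdiff : ∀ q : EuclideanSpace ℝ (Fin d),
      ∑ i, bregman F F' (p i) q - ∑ i, bregman F F' (p i) pbar
        = (n : ℝ) * (F pbar - F q - ⟪pbar - q, F' q⟫) := by
    intro q
    rw [key q, key pbar]
    simp [real_inner_self_eq_norm_sq]
    ring
  constructor
  · intro q hq
    rcases eq_or_ne q pbar with rfl | hne
    · exact le_refl _
    · have hgi := grad_ineq_strict hXconv hF hq hpbarX hne (hF' q hq)
      have hd := hdiff q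
      have h1 : 0 < F pbar - F q - ⟪pbar - q, F' q⟫ := by linarith
      have hpos : 0 < (n : ℝ) := by positivity
      have h2 : ∑ i, bregman F F' (p i) pbar ≤ ∑ i, bregman F F' (p i) q := by
        nlinarith [mul_pos hpos h1]
      exact mul_le_mul_of_nonneg_left h2 (by positivity)
  · intro q hq heq
    by_contra hne
    have hgi := grad_ineq_strict hXconv hF hq hpbarX hne (hF' q hq)
    have hd := hdiff q
    have h1 : 0 < F pbar - F q - ⟪pbar - q, F' q⟫ := by linarith
    have hpos : 0 < (n : ℝ) := by positivity
    have h2 : ∑ i, bregman F F' (p i) pbar < ∑ i, bregman F F' (p i) q := by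
      nlinarith [mul_pos hpos h1]
    have h3 := mul_lt_mul_of_pos_left h2 (inv_pos.mpr hpos)
    linarith [heq, h3]
end

section
/- The left-sided Bregman centroid, i.e., the unique minimizer over c ∈ X of (1/n)∑_{i=1}^n D_F(c‖p_i), equals (∇F)^{−1}((1/n)∑_{i=1}^n ∇F(p_i)), the ∇F-generalized mean of the points. -/
open scoped RealInnerProductSpace

/-- Non-strict gradient inequality for convex functions. -/
lemma convex_grad_ineq {d : ℕ} {X : Set (EuclideanSpace ℝ (Fin d))}
    {F : EuclideanSpace ℝ (Fin d) → ℝ} (hF : ConvexOn ℝ X F)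
    {x z g : EuclideanSpace ℝ (Fin d)} (hx : x ∈ X) (hz : z ∈ X)
    (hg : HasGradientAt F g x) : F x + ⟪z - x, g⟫ ≤ F z := by
  set L := AffineMap.lineMap (k := ℝ) x z with hL
  have hφ : ConvexOn ℝ (L ⁻¹' X) (F ∘ L) := hF.comp_affineMap L
  have hsub : Set.Icc (0 : ℝ) 1 ⊆ L ⁻¹' X := by
    intro t ht
    have : L t ∈ segment ℝ x z := by
      rw [segment_eq_image_lineMap]
      exact ⟨t, ht, rfl⟩
    exact hF.1.segment_subset hx hz this
  have hφ' : ConvexOn ℝ (Set.Icc (0 : ℝ) 1) (F ∘ L) :=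
    hφ.subset hsub (convex_Icc 0 1)
  have hline : HasDerivAt (fun t : ℝ => L t) (z - x) 0 := by
    have h1 : HasDerivAt (fun t : ℝ => t • (z - x) + x) ((1 : ℝ) • (z - x)) 0 :=
      ((hasDerivAt_id (0 : ℝ)).smul_const (z - x)).add_const x
    have h2 : (fun t : ℝ => L t) = fun t : ℝ => t • (z - x) + x := by
      funext t
      simp [hL, AffineMap.lineMap_apply, vadd_eq_add]
    rw [h2]
    simpa using h1
  have hgL : HasFDerivAt F (InnerProductSpace.toDual ℝ _ g) (L 0) := by
    rw [hL, AffineMap.lineMap_apply_zero]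
    exact hg.hasFDerivAt
  have hderiv : HasDerivAt (F ∘ L) ⟪z - x, g⟫ 0 := by
    have := hgL.comp_hasDerivAt 0 hline
    rw [show ⟪z - x, g⟫ = (InnerProductSpace.toDual ℝ _ g) (z - x) from real_inner_comm _ _]
    exact this
  have hle := hφ'.le_slope_of_hasDerivAt (by simp : (0:ℝ) ∈ Set.Icc (0:ℝ) 1)
    (by simp : (1:ℝ) ∈ Set.Icc (0:ℝ) 1) one_pos hderiv
  have hslope : slope (F ∘ L) 0 1 = F z - F x := by
    simp [slope, Function.comp, hL]
  rw [hslope] at hle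
  linarith

/-- Strict gradient inequality for strictly convex functions. -/
lemma strict_convex_grad_ineq {d : ℕ} {X : Set (EuclideanSpace ℝ (Fin d))}
    {F : EuclideanSpace ℝ (Fin d) → ℝ} (hF : StrictConvexOn ℝ X F)
    {x z g : EuclideanSpace ℝ (Fin d)} (hx : x ∈ X) (hz : z ∈ X) (hne : z ≠ x)
    (hg : HasGradientAt F g x) : F x + ⟪z - x, g⟫ < F z := by
  set m := (2 : ℝ)⁻¹ • x + (2 : ℝ)⁻¹ • z with hm
  have hmX : m ∈ X := hF.1 hx hz (by norm_num) (by norm_num) (by norm_num)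
  have hmid : F m < (2 : ℝ)⁻¹ * F x + (2 : ℝ)⁻¹ * F z :=
    hF.2 hx hz (Ne.symm hne) (by norm_num) (by norm_num) (by norm_num)
  have hineq := convex_grad_ineq hF.convexOn hx hmX hg
  have hmsub : m - x = (2 : ℝ)⁻¹ • (z - x) := by
    rw [hm]; module
  rw [hmsub, real_inner_smul_left] at hineq
  linarith

/-- The left-sided Bregman centroid is the `∇F`-generalized mean
`(∇F)⁻¹((1/n)∑ ∇F(pᵢ))`: it is the unique minimizer of the average left divergence. -/
theorem left_bregman_centroid_is_gradient_mean {d n : ℕ} (hn : 0 < n)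
    {X Y : Set (EuclideanSpace ℝ (Fin d))} (hXopen : IsOpen X) (hXconv : Convex ℝ X)
    {F : EuclideanSpace ℝ (Fin d) → ℝ}
    {F' : EuclideanSpace ℝ (Fin d) → EuclideanSpace ℝ (Fin d)}
    (hF : StrictConvexOn ℝ X F)
    (hF' : ∀ x ∈ X, HasGradientAt F (F' x) x)
    (hbij : Set.BijOn F' X Y)
    (p : Fin n → EuclideanSpace ℝ (Fin d)) (hp : ∀ i, p i ∈ X)
    (cL : EuclideanSpace ℝ (Fin d)) (hcL : cL ∈ X)
    -- `cL = (∇F)⁻¹((1/n) ∑ ∇F(pᵢ))`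
    (hcLmean : F' cL = (n : ℝ)⁻¹ • ∑ i, F' (p i)) :
    (∀ c ∈ X, (n : ℝ)⁻¹ * ∑ i, bregman F F' cL (p i) ≤
        (n : ℝ)⁻¹ * ∑ i, bregman F F' c (p i)) ∧
    (∀ c ∈ X, (n : ℝ)⁻¹ * ∑ i, bregman F F' cL (p i) =
        (n : ℝ)⁻¹ * ∑ i, bregman F F' c (p i) → c = cL) := by
  have hn0 : (n : ℝ) ≠ 0 := Nat.cast_ne_zero.mpr hn.ne'
  have key : ∀ c, (n : ℝ)⁻¹ * ∑ i, bregman F F' c (p i) -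
      (n : ℝ)⁻¹ * ∑ i, bregman F F' cL (p i)
      = F c - F cL - ⟪c - cL, F' cL⟫ := by
    intro c
    have hterm : ∀ i, bregman F F' c (p i) - bregman F F' cL (p i)
        = (F c - F cL) - ⟪c - cL, F' (p i)⟫ := by
      intro i
      have h : ⟪c - p i, F' (p i)⟫ - ⟪cL - p i, F' (p i)⟫ = ⟪c - cL, F' (p i)⟫ := by
        rw [← inner_sub_left, sub_sub_sub_cancel_right]
      simp only [bregman]
      linarith [h]
    have hmean : ⟪c - cL, F' cL⟫ = (n : ℝ)⁻¹ * ⟪c - cL, ∑ i, F' (p i)⟫ := by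
      rw [hcLmean, real_inner_smul_right]
    rw [← mul_sub, ← Finset.sum_sub_distrib]
    simp only [hterm]
    rw [Finset.sum_sub_distrib, Finset.sum_const, Finset.card_univ, Fintype.card_fin,
      ← inner_sum, nsmul_eq_mul, hmean]
    field_simp
  constructor
  · intro c hc
    have h := convex_grad_ineq hF.convexOn hcL hc (hF' cL hcL)
    have hk := key c
    linarith
  · intro c hc heq
    by_contra hne
    have h := strict_convex_grad_ineq hF hcL hc hne (hF' cL hcL)
    have hk := key c
    linarith
end

section
/- Minimizing the average symmetrized Bregman divergence c ↦ (1/n)∑_{i=1}^n (D_F(p_i‖c) + D_F(c‖p_i))/2 over c ∈ X is equivalent to minimizing q ↦ D_F(c_R‖q) + D_F(q‖c_L), where c_R = (1/n)∑ p_i and c_L = (∇F)^{−1}((1/n)∑ ∇F(p_i)); i.e., the two objective functions differ by a constant independent of the variable. -/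
open scoped RealInnerProductSpace

/-- Minimizing the average symmetrized Bregman divergence is equivalent to minimizing
`q ↦ D_F(c_R‖q) + D_F(q‖c_L)`: the two objectives agree up to a constant
(and a fixed positive factor 1/2). -/
theorem symmetrized_objective_reduction {d n : ℕ} (hn : 0 < n)
    {X : Set (EuclideanSpace ℝ (Fin d))} (hXopen : IsOpen X) (hXconv : Convex ℝ X)
    {F : EuclideanSpace ℝ (Fin d) → ℝ}
    {F' : EuclideanSpace ℝ (Fin d) → EuclideanSpace ℝ (Fin d)}
    (hF : StrictConvexOn ℝ X F)
    (hF' : ∀ x ∈ X, HasGradientAt F (F' x) x)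
    (p : Fin n → EuclideanSpace ℝ (Fin d)) (hp : ∀ i, p i ∈ X)
    (cR : EuclideanSpace ℝ (Fin d)) (hcR : cR = (n : ℝ)⁻¹ • ∑ i, p i)
    (cL : EuclideanSpace ℝ (Fin d)) (hcL : cL ∈ X)
    (hcLmean : F' cL = (n : ℝ)⁻¹ • ∑ i, F' (p i)) :
    ∃ K : ℝ, ∀ q ∈ X,
      (n : ℝ)⁻¹ * ∑ i, (bregman F F' (p i) q + bregman F F' q (p i)) / 2 =
        (bregman F F' cR q + bregman F F' q cL) / 2 + K := by
  refine ⟨((n : ℝ)⁻¹ * ∑ i, ⟪p i, F' (p i)⟫ - F cR + F cL - ⟪cL, F' cL⟫) / 2, ?_⟩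
  intro q hq
  have hn' : (n : ℝ) ≠ 0 := Nat.cast_ne_zero.mpr hn.ne'
  have hA : ∑ i, ⟪p i, F' q⟫ = (n : ℝ) * ⟪cR, F' q⟫ := by
    rw [hcR, real_inner_smul_left, sum_inner]
    field_simp
  have hB : ∑ i, ⟪q, F' (p i)⟫ = (n : ℝ) * ⟪q, F' cL⟫ := by
    rw [hcLmean, real_inner_smul_right, inner_sum]
    field_simp
  simp only [bregman, inner_sub_left]
  simp only [← Finset.sum_div, Finset.sum_add_distrib, Finset.sum_sub_distrib,
    Finset.sum_const, Finset.card_univ, Fintype.card_fin, nsmul_eq_mul]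
  rw [hA, hB]
  field_simp
  ring
end

section
/- Generalized Pythagoras' inequality for Bregman projections: if Ω ⊆ X is convex and closed in X, q ∈ X, and P_Ω(q) = argmin_{ω∈Ω} D_F(ω‖q) is the Bregman projection of q onto Ω, then for every p ∈ Ω, D_F(p‖q) ≥ D_F(p‖P_Ω(q)) + D_F(P_Ω(q)‖q). -/
open scoped RealInnerProductSpace

/-- Generalized Pythagoras' inequality for Bregman projections onto a convex set
`Ω`, closed in `X`: `D_F(p‖q) ≥ D_F(p‖P_Ω(q)) + D_F(P_Ω(q)‖q)` for all `p ∈ Ω`. -/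
theorem bregman_pythagoras {d : ℕ}
    {X : Set (EuclideanSpace ℝ (Fin d))} (hXopen : IsOpen X) (hXconv : Convex ℝ X)
    {F : EuclideanSpace ℝ (Fin d) → ℝ}
    {F' : EuclideanSpace ℝ (Fin d) → EuclideanSpace ℝ (Fin d)}
    (hF : StrictConvexOn ℝ X F)
    (hF' : ∀ x ∈ X, HasGradientAt F (F' x) x)
    {Ω : Set (EuclideanSpace ℝ (Fin d))} (hΩX : Ω ⊆ X)
    (hΩne : Ω.Nonempty) (hΩconv : Convex ℝ Ω)
    (hΩclosed : IsClosed ((↑·) ⁻¹' Ω : Set X))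
    {q : EuclideanSpace ℝ (Fin d)} (hq : q ∈ X)
    {proj : EuclideanSpace ℝ (Fin d)} (hproj : proj ∈ Ω)
    (hmin : ∀ ω ∈ Ω, bregman F F' proj q ≤ bregman F F' ω q) :
    ∀ p ∈ Ω, bregman F F' p proj + bregman F F' proj q ≤ bregman F F' p q := by
  intro p hp
  set v : EuclideanSpace ℝ (Fin d) := p - proj with hv
  -- the line t ↦ proj + t • v
  set L : ℝ → EuclideanSpace ℝ (Fin d) := fun t => proj + t • v with hL
  have hLmem : ∀ t ∈ Set.Icc (0:ℝ) 1, L t ∈ Ω := by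
    intro t ht
    have := hΩconv hproj hp (a := 1 - t) (b := t) (by linarith [ht.2]) ht.1 (by ring)
    convert this using 1
    simp only [hL, hv]
    module
  have hLderiv : HasDerivAt L v 0 := by
    simpa [hL] using ((hasDerivAt_id (0:ℝ)).smul_const v).const_add proj
  have hFgrad : HasGradientAt F (F' proj) proj := hF' proj (hΩX hproj)
  have hcomp : HasDerivAt (fun t => F (L t)) (⟪F' proj, v⟫) 0 := by
    have hF0 : HasFDerivAt F
        ((InnerProductSpace.toDual ℝ (EuclideanSpace ℝ (Fin d))) (F' proj)) (L 0) := by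
      simpa [hL] using hFgrad.hasFDerivAt
    have h := hF0.comp_hasDerivAt 0 hLderiv
    simpa [InnerProductSpace.toDual_apply_apply, Function.comp_def] using h
  set s : ℝ := ⟪F' proj, v⟫ - ⟪v, F' q⟫ with hs
  set g : ℝ → ℝ := fun t => F (L t) - F q - ⟪L t - q, F' q⟫ with hg
  have hgderiv : HasDerivAt g s 0 := by
    have hlin : ∀ t : ℝ, ⟪L t - q, F' q⟫ = ⟪proj - q, F' q⟫ + t * ⟪v, F' q⟫ := by
      intro t
      have : L t - q = (proj - q) + t • v := by simp only [hL]; module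
      rw [this, inner_add_left, real_inner_smul_left]
    have : HasDerivAt (fun t => F (L t) - F q - (⟪proj - q, F' q⟫ + t * ⟪v, F' q⟫)) s 0 := by
      have h2 : HasDerivAt (fun t : ℝ => ⟪proj - q, F' q⟫ + t * ⟪v, F' q⟫) (⟪v, F' q⟫) 0 := by
        simpa using ((hasDerivAt_id (0:ℝ)).mul_const (⟪v, F' q⟫)).const_add (⟪proj - q, F' q⟫)
      simpa [hs, Pi.sub_def] using (hcomp.sub_const (F q)).sub h2
    exact this.congr_deriv rfl |>.congr_of_eventuallyEq (by
      filter_upwards with t using by rw [hg]; simp only [hlin t])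
  -- g t = bregman F F' (L t) q, minimized at 0 over [0,1]
  have hgmin : ∀ t ∈ Set.Ioc (0:ℝ) 1, g 0 ≤ g t := by
    intro t ht
    have h1 : g t = bregman F F' (L t) q := rfl
    have h0 : g 0 = bregman F F' proj q := by
      simp [hg, hL, bregman]
    rw [h0, h1]
    exact hmin _ (hLmem t ⟨le_of_lt ht.1, ht.2⟩)
  -- right derivative at a min is nonneg
  have hs0 : 0 ≤ s := by
    have htend : Filter.Tendsto (slope g 0) (nhdsWithin 0 {(0:ℝ)}ᶜ) (nhds s) :=
      hasDerivAt_iff_tendsto_slope.mp hgderiv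
    have htend' : Filter.Tendsto (slope g 0) (nhdsWithin 0 (Set.Ioi 0)) (nhds s) :=
      htend.mono_left (nhdsWithin_mono _ (fun x hx => ne_of_gt hx))
    refine ge_of_tendsto htend' ?_
    filter_upwards [Ioc_mem_nhdsGT one_pos] with t ht
    have : 0 ≤ g t - g 0 := by linarith [hgmin t ht]
    have := div_nonneg this (le_of_lt ht.1)
    simpa [slope_def_field, div_eq_inv_mul] using this
  -- algebra
  have key : bregman F F' p q - (bregman F F' p proj + bregman F F' proj q) = s := by
    simp only [bregman, hs, hv]
    have h1 : p - q = (p - proj) + (proj - q) := by module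
    rw [h1, inner_add_left, real_inner_comm (F' proj)]
    ring
  linarith [hs0, key]
end
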